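/- arXiv:2505.07640 — 2 statements merged into one kernel-verified Lean document; each statement's English description precedes it below -/
import Mathlib

section
/- For integers n, m with m ≤ (n+1)/3, the partial sum of binomial coefficients satisfies Σ_{s=0}^{m} C(n, s) ≤ 2·C(n, m). -/
/-- For `m ≤ (n+1)/3`, the partial sum of binomial coefficients satisfies
`Σ_{s=0}^{m} C(n, s) ≤ 2 C(n, m)`. -/
theorem sum_choose_le_two_mul (n m : ℕ) (h : 3 * m ≤ n + 1) :
    ∑ s ∈ Finset.range (m + 1), n.choose s ≤ 2 * n.choose m := by
  induction m with
  | zero => simp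
  | succ m ih =>
    have h' : 3 * m ≤ n + 1 := by omega
    have key : 2 * n.choose m ≤ n.choose (m + 1) := by
      have hmul : n.choose (m + 1) * (m + 1) = n.choose m * (n - m) :=
        Nat.choose_succ_right_eq n m
      have hle : 2 * (m + 1) ≤ n - m := by omega
      have : 2 * n.choose m * (m + 1) ≤ n.choose (m + 1) * (m + 1) := by
        calc 2 * n.choose m * (m + 1) = n.choose m * (2 * (m + 1)) := by ring
          _ ≤ n.choose m * (n - m) := Nat.mul_le_mul_left _ hle
          _ = n.choose (m + 1) * (m + 1) := hmul.symm
      exact Nat.le_of_mul_le_mul_right this (by omega)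
    rw [Finset.sum_range_succ]
    calc ∑ s ∈ Finset.range (m + 1), n.choose s + n.choose (m + 1)
        ≤ 2 * n.choose m + n.choose (m + 1) := by
          exact Nat.add_le_add_right (ih h') _
      _ ≤ n.choose (m + 1) + n.choose (m + 1) := Nat.add_le_add_right key _
      _ = 2 * n.choose (m + 1) := by ring
end

section
/- (Alternative leave-M-out identity) Under the same setting, β̂_{\M} − β̂ = Ḡ^{-1} Σ_{i∈M} ℓ̇(y_i | x_iᵀ β̂_{\M}) x_i, where Ḡ = ∫₀¹ G(t β̂ + (1−t) β̂_{\M}) dt is the averaged full-data Hessian G(β) = Σ_{i=1}^n ℓ̈(y_i|x_iᵀβ) x_i x_iᵀ + λ ∇²r(β). -/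
open MeasureTheory intervalIntegral

/-- The rank-one operator `v ↦ ⟪x, v⟫ x`. -/
noncomputable def rankOne {p : ℕ} (x : EuclideanSpace ℝ (Fin p)) :
    EuclideanSpace ℝ (Fin p) →L[ℝ] EuclideanSpace ℝ (Fin p) :=
  (innerSL ℝ x).smulRight x

/-- Alternative leave-`M`-out identity for regularized ERM:
`β̂_{\M} - β̂ = Ḡ⁻¹ Σ_{i∈M} ℓ̇(y_i | x_iᵀ β̂_{\M}) x_i`, where `Ḡ` is the averaged
full-data Hessian along the segment between `β̂` and `β̂_{\M}`. -/
theorem leave_M_out_identity_alt (n p : ℕ)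
    (x : Fin n → EuclideanSpace ℝ (Fin p)) (y : Fin n → ℝ)
    (M : Finset (Fin n))
    (ℓ dℓ ddℓ : ℝ → ℝ → ℝ)
    (hd1 : ∀ a z, HasDerivAt (ℓ a) (dℓ a z) z)
    (hd2 : ∀ a z, HasDerivAt (dℓ a) (ddℓ a z) z)
    (r : EuclideanSpace ℝ (Fin p) → ℝ)
    (gr : EuclideanSpace ℝ (Fin p) → EuclideanSpace ℝ (Fin p))
    (Hr : EuclideanSpace ℝ (Fin p) →
      (EuclideanSpace ℝ (Fin p) →L[ℝ] EuclideanSpace ℝ (Fin p)))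
    (hgr : ∀ β, HasGradientAt r (gr β) β)
    (hHr : ∀ β, HasFDerivAt gr (Hr β) β)
    (lam : ℝ) (hlam : 0 < lam)
    (L LM : EuclideanSpace ℝ (Fin p) → ℝ)
    (hL : L = fun β => (∑ i, ℓ (y i) ((inner ℝ (x i) β : ℝ))) + lam * r β)
    (hLM : LM = fun β => (∑ i ∈ Mᶜ, ℓ (y i) ((inner ℝ (x i) β : ℝ))) + lam * r β)
    (hsc : StrictConvexOn ℝ Set.univ L) (hscM : StrictConvexOn ℝ Set.univ LM)
    (βhat βhatM : EuclideanSpace ℝ (Fin p))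
    (hmin : IsMinOn L Set.univ βhat) (hminM : IsMinOn LM Set.univ βhatM)
    (G : EuclideanSpace ℝ (Fin p) →
      (EuclideanSpace ℝ (Fin p) →L[ℝ] EuclideanSpace ℝ (Fin p)))
    (hG : G = fun β =>
      (∑ i, ddℓ (y i) ((inner ℝ (x i) β : ℝ)) • rankOne (x i)) + lam • Hr β)
    (Gbar : EuclideanSpace ℝ (Fin p) ≃L[ℝ] EuclideanSpace ℝ (Fin p))
    (hGbar : (Gbar : EuclideanSpace ℝ (Fin p) →L[ℝ] EuclideanSpace ℝ (Fin p))
      = ∫ t in (0:ℝ)..1, G (t • βhat + (1 - t) • βhatM)) :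
    βhatM - βhat = Gbar.symm (∑ i ∈ M, dℓ (y i) ((inner ℝ (x i) βhatM : ℝ)) • x i) := by
  subst hL hLM hG
  -- trivial case
  rcases subsingleton_or_nontrivial (EuclideanSpace ℝ (Fin p)) with hE | hE
  · exact Subsingleton.elim _ _
  -- gradients
  set gL : EuclideanSpace ℝ (Fin p) → EuclideanSpace ℝ (Fin p) :=
    fun β => (∑ i, dℓ (y i) ((inner ℝ (x i) β : ℝ)) • x i) + lam • gr β with hgL
  set gLM : EuclideanSpace ℝ (Fin p) → EuclideanSpace ℝ (Fin p) :=
    fun β => (∑ i ∈ Mᶜ, dℓ (y i) ((inner ℝ (x i) β : ℝ)) • x i) + lam • gr β with hgLM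
  have hinner : ∀ i (β : EuclideanSpace ℝ (Fin p)),
      HasFDerivAt (fun β : EuclideanSpace ℝ (Fin p) => ℓ (y i) ((inner ℝ (x i) β : ℝ)))
        (dℓ (y i) ((inner ℝ (x i) β : ℝ)) • innerSL ℝ (x i)) β := fun i β =>
    (hd1 _ _).comp_hasFDerivAt β (innerSL ℝ (x i)).hasFDerivAt
  have htoDual : ∀ g : EuclideanSpace ℝ (Fin p),
      (InnerProductSpace.toDual ℝ (EuclideanSpace ℝ (Fin p)) g :
        EuclideanSpace ℝ (Fin p) →L[ℝ] ℝ) = innerSL ℝ g := by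
    intro g; ext v; simp
  have hgrad : ∀ (s : Finset (Fin n)) (β : EuclideanSpace ℝ (Fin p)),
      HasFDerivAt (fun β => (∑ i ∈ s, ℓ (y i) ((inner ℝ (x i) β : ℝ))) + lam * r β)
        (InnerProductSpace.toDual ℝ (EuclideanSpace ℝ (Fin p))
          ((∑ i ∈ s, dℓ (y i) ((inner ℝ (x i) β : ℝ)) • x i) + lam • gr β) :
          EuclideanSpace ℝ (Fin p) →L[ℝ] ℝ) β := by
    intro s β
    have h1 : HasFDerivAt (fun β => (∑ i ∈ s, ℓ (y i) ((inner ℝ (x i) β : ℝ))) + lam * r β)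
        ((∑ i ∈ s, dℓ (y i) ((inner ℝ (x i) β : ℝ)) • innerSL ℝ (x i))
          + lam • innerSL ℝ (gr β)) β := by
      refine HasFDerivAt.add (HasFDerivAt.fun_sum fun i _ => hinner i β) ?_
      have h2 := ((hgr β).hasFDerivAt).const_smul lam
      rw [htoDual] at h2
      exact h2
    convert h1 using 1
    ext v
    simp [inner_add_left, inner_sum, real_inner_smul_left]
  -- stationarity
  have hstat : gL βhat = 0 := by
    have h0 := (hmin.isLocalMin (by simp)).hasFDerivAt_eq_zero (hgrad Finset.univ βhat)
    exact (InnerProductSpace.toDual ℝ (EuclideanSpace ℝ (Fin p))).injective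
      (by rw [map_zero]; exact h0)
  have hstatM : gLM βhatM = 0 := by
    have h0 := (hminM.isLocalMin (by simp)).hasFDerivAt_eq_zero (hgrad Mᶜ βhatM)
    exact (InnerProductSpace.toDual ℝ (EuclideanSpace ℝ (Fin p))).injective
      (by rw [map_zero]; exact h0)
  -- gL βhatM equals the M-sum
  have hsplit : gL βhatM = ∑ i ∈ M, dℓ (y i) ((inner ℝ (x i) βhatM : ℝ)) • x i := by
    have hs := Finset.sum_add_sum_compl M
      (fun i => dℓ (y i) ((inner ℝ (x i) βhatM : ℝ)) • x i)
    have h0 := hstatM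
    rw [hgLM] at h0
    simp only at h0
    rw [hgL]
    simp only
    rw [← hs, add_comm (∑ i ∈ M, _) (∑ i ∈ Mᶜ, _), add_assoc, add_comm (∑ i ∈ M, _), ← add_assoc,
      h0, zero_add]
  -- derivative of gL is G
  have hDgL : ∀ β : EuclideanSpace ℝ (Fin p),
      HasFDerivAt gL ((∑ i, ddℓ (y i) ((inner ℝ (x i) β : ℝ)) • rankOne (x i)) + lam • Hr β) β := by
    intro β
    refine HasFDerivAt.add (HasFDerivAt.fun_sum fun i _ => ?_) ((hHr β).const_smul lam)
    have h := ((hd2 (y i) ((inner ℝ (x i) β : ℝ))).comp_hasFDerivAt β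
      (innerSL ℝ (x i)).hasFDerivAt).smul_const (x i)
    convert h using 1
    · rfl
    ext v
    simp [rankOne, smul_smul]
  -- the path
  set γ : ℝ → EuclideanSpace ℝ (Fin p) := fun t => t • βhat + (1 - t) • βhatM with hγ
  set v : EuclideanSpace ℝ (Fin p) := βhat - βhatM with hv
  set G : EuclideanSpace ℝ (Fin p) →
      (EuclideanSpace ℝ (Fin p) →L[ℝ] EuclideanSpace ℝ (Fin p)) :=
    fun β => (∑ i, ddℓ (y i) ((inner ℝ (x i) β : ℝ)) • rankOne (x i)) + lam • Hr β with hG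
  have hγd : ∀ t : ℝ, HasDerivAt γ v t := by
    intro t
    have h1 : HasDerivAt (fun t : ℝ => t • βhat) βhat t := by
      simpa using (hasDerivAt_id t).smul_const βhat
    have h2 : HasDerivAt (fun t : ℝ => (1 - t) • βhatM) (-βhatM) t := by
      have h3 : HasDerivAt (fun t : ℝ => (1 - t)) (-1) t := by
        simpa using (hasDerivAt_id t).const_sub 1
      simpa using h3.smul_const βhatM
    exact (h1.add h2).congr_deriv (sub_eq_add_neg _ _).symm
  have hφd : ∀ t : ℝ, HasDerivAt (fun t => gL (γ t)) (G (γ t) v) t := fun t =>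
    (hDgL (γ t)).comp_hasDerivAt t (hγd t)
  -- integrability
  have hΨint : IntervalIntegrable (fun t => G (γ t)) volume 0 1 := by
    by_contra hc
    have h0 : (∫ t in (0:ℝ)..1, G (γ t)) = 0 := intervalIntegral.integral_undef hc
    rw [hγ] at h0
    rw [h0] at hGbar
    obtain ⟨w, hw⟩ := exists_ne (0 : EuclideanSpace ℝ (Fin p))
    apply hw
    calc w = Gbar.symm (Gbar w) := (Gbar.symm_apply_apply w).symm
    _ = Gbar.symm 0 := by
        rw [show Gbar w = 0 from by rw [← ContinuousLinearEquiv.coe_coe, hGbar]; rfl]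
    _ = 0 := map_zero _
  have hφ'int : IntervalIntegrable (fun t => G (γ t) v) volume 0 1 :=
    ⟨(ContinuousLinearMap.apply ℝ (EuclideanSpace ℝ (Fin p)) v).integrable_comp hΨint.1,
     (ContinuousLinearMap.apply ℝ (EuclideanSpace ℝ (Fin p)) v).integrable_comp hΨint.2⟩
  -- FTC
  have hFTC : (∫ t in (0:ℝ)..1, G (γ t) v) = gL (γ 1) - gL (γ 0) :=
    intervalIntegral.integral_eq_sub_of_hasDerivAt (fun t _ => hφd t) hφ'int
  have hγ1 : γ 1 = βhat := by simp [hγ]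
  have hγ0 : γ 0 = βhatM := by simp [hγ]
  -- swap apply and integral
  have happly : (Gbar : EuclideanSpace ℝ (Fin p) →L[ℝ] EuclideanSpace ℝ (Fin p)) v
      = ∫ t in (0:ℝ)..1, G (γ t) v := by
    rw [hGbar]
    rw [show (∫ t in (0:ℝ)..1, G (t • βhat + (1 - t) • βhatM)) = ∫ t in (0:ℝ)..1, G (γ t) from rfl]
    rw [intervalIntegral.integral_of_le (by norm_num : (0:ℝ) ≤ 1),
        intervalIntegral.integral_of_le (by norm_num : (0:ℝ) ≤ 1)]
    exact ContinuousLinearMap.integral_apply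
      ((intervalIntegrable_iff_integrableOn_Ioc_of_le (by norm_num)).mp hΨint) v
  have key : (Gbar : EuclideanSpace ℝ (Fin p) →L[ℝ] EuclideanSpace ℝ (Fin p)) v
      = - ∑ i ∈ M, dℓ (y i) ((inner ℝ (x i) βhatM : ℝ)) • x i := by
    rw [happly, hFTC, hγ1, hγ0, hstat, hsplit, zero_sub]
  have key2 : Gbar (βhatM - βhat) = ∑ i ∈ M, dℓ (y i) ((inner ℝ (x i) βhatM : ℝ)) • x i := by
    have hneg : βhatM - βhat = -v := by rw [hv]; abel
    rw [hneg, map_neg]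
    simp only [ContinuousLinearEquiv.coe_coe] at key ⊢
    rw [key, neg_neg]
  rw [← key2, ContinuousLinearEquiv.symm_apply_apply]
end
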